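/- (Lower bound via double summation form.) For every f ∈ F_{II} (i.e., f_0 = 0, f > 0 on T\{0}) and every g with g_0 = 0 and μ(g²) = 1, one has 1 ≤ D(g) · sup_{j∈T\{0}} II_j(f), where II_j(f) = (1/f_j) Σ_{k∈P(j)} (1/(μ_k q_{kk*})) Σ_{i∈T_k} μ_i f_i. Consequently λ_0 ≥ sup_{f∈F_{II}} inf_{i∈T\{0}} II_i(f)^{-1}. -/

import Mathlib

open Finset
open scoped Classical

structure BDTree (V : Type*) [Fintype V] where
  root : V
  parent : V → V
  layer : V → ℕ
  q : V → V → ℝ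
  parent_root : parent root = root
  layer_root : layer root = 0
  layer_parent : ∀ i, i ≠ root → layer i = layer (parent i) + 1
  reach : ∀ i, ∃ n, parent^[n] i = root
  q_pos_up : ∀ i, i ≠ root → 0 < q i (parent i)
  q_pos_down : ∀ i, i ≠ root → 0 < q (parent i) i

namespace BDTree

variable {V : Type*} [Fintype V] (T : BDTree V)

/-- The set of sons of a vertex. -/
noncomputable def sons (i : V) : Finset V :=
  Finset.univ.filter fun j => j ≠ T.root ∧ T.parent j = i

/-- The subtree `T_k` rooted at `k` (including `k`). -/
noncomputable def subtree (k : V) : Finset V :=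
  Finset.univ.filter fun j => ∃ n, T.parent^[n] j = k

/-- The path set `P(i)`: vertices (excluding the root) on the path from `i` to the root. -/
noncomputable def pathSet (i : V) : Finset V :=
  Finset.univ.filter fun k => k ≠ T.root ∧ ∃ n, T.parent^[n] i = k

/-- The symmetric measure `μ`. -/
noncomputable def mu (k : V) : ℝ :=
  ∏ j ∈ T.pathSet k, T.q (T.parent j) j / T.q j (T.parent j)

/-- The operator `Ω`. -/
noncomputable def Omega (g : V → ℝ) (i : V) : ℝ :=
  (∑ j ∈ T.sons i, T.q i j * (g j - g i)) + T.q i (T.parent i) * (g (T.parent i) - g i)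

/-- The set of non-root vertices `T \ {0}`. -/
noncomputable def nonroot : Finset V := Finset.univ.filter fun i => i ≠ T.root

/-- The Dirichlet form `D(f)`. -/
noncomputable def D (f : V → ℝ) : ℝ :=
  ∑ i ∈ T.nonroot, T.mu i * T.q i (T.parent i) * (f i - f (T.parent i)) ^ 2

/-- `μ(f²)`. -/
noncomputable def norm2 (f : V → ℝ) : ℝ := ∑ i ∈ T.nonroot, T.mu i * f i ^ 2

/-- The principal Dirichlet eigenvalue `λ₀`, via the classical variational formula. -/
noncomputable def lam0 : ℝ := sInf {r | ∃ f : V → ℝ, f T.root = 0 ∧ T.norm2 f = 1 ∧ r = T.D f}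

/-- The single-summation operator `I`. -/
noncomputable def opI (f : V → ℝ) (i : V) : ℝ :=
  (∑ j ∈ T.subtree i, T.mu j * f j) /
    (T.mu i * T.q i (T.parent i) * (f i - f (T.parent i)))

/-- The double-summation operator `II`. -/
noncomputable def opII (f : V → ℝ) (i : V) : ℝ :=
  (∑ k ∈ T.pathSet i, (1 / (T.mu k * T.q k (T.parent k))) *
      ∑ j ∈ T.subtree k, T.mu j * f j) / f i

/-- The difference-form operator `R`; at a son of the root the convention `w_0 = ∞`,
`1/∞ = 0` is used, i.e. the term `w i⁻¹` is replaced by `0`. -/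
noncomputable def R (w : V → ℝ) (i : V) : ℝ :=
  T.q i (T.parent i) * (1 - (if T.parent i = T.root then 0 else (w i)⁻¹)) +
    ∑ j ∈ T.sons i, T.q i j * (1 - w j)

/-- Membership in the test-function class `W = {w : w > 1, w_0 = ∞}` (the value at a son
of the root plays the role of `∞` and is not used by `R`). -/
def memW (w : V → ℝ) : Prop := ∀ i, i ≠ T.root → T.parent i ≠ T.root → 1 < w i

/-- `φ_j = Σ_{k∈P(j)} 1/(μ_k q_{kk*})`. -/
noncomputable def phi (j : V) : ℝ :=
  ∑ k ∈ T.pathSet j, 1 / (T.mu k * T.q k (T.parent k))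

-- auxiliary lemmas

lemma mem_nonroot {i : V} : i ∈ T.nonroot ↔ i ≠ T.root := by
  simp [nonroot]

lemma mem_pathSet {i k : V} :
    k ∈ T.pathSet i ↔ k ≠ T.root ∧ ∃ n, T.parent^[n] i = k := by
  simp [pathSet]

lemma mem_subtree {j k : V} : j ∈ T.subtree k ↔ ∃ n, T.parent^[n] j = k := by
  simp [subtree]

lemma iterate_root (n : ℕ) : T.parent^[n] T.root = T.root :=
  Function.iterate_fixed T.parent_root n

lemma pathSet_root : T.pathSet T.root = ∅ := by
  ext k
  simp only [mem_pathSet, Finset.notMem_empty, iff_false, not_and]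
  rintro hk ⟨n, hn⟩
  exact hk (hn ▸ (T.iterate_root n).symm ▸ (T.iterate_root n))

lemma layer_parent_le (x : V) : T.layer (T.parent x) ≤ T.layer x := by
  by_cases hx : x = T.root
  · subst hx; rw [T.parent_root]
  · rw [T.layer_parent x hx]; omega

lemma layer_iterate_le (n : ℕ) (x : V) : T.layer (T.parent^[n] x) ≤ T.layer x := by
  induction n with
  | zero => simp
  | succ m ih =>
    rw [Function.iterate_succ_apply']
    exact (T.layer_parent_le _).trans ih

lemma not_mem_pathSet_parent {j : V} (hj : j ≠ T.root) :
    j ∉ T.pathSet (T.parent j) := by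
  rw [mem_pathSet]
  rintro ⟨-, n, hn⟩
  have h1 := T.layer_iterate_le n (T.parent j)
  rw [hn, T.layer_parent j hj] at h1
  omega

lemma pathSet_eq_insert {j : V} (hj : j ≠ T.root) :
    T.pathSet j = insert j (T.pathSet (T.parent j)) := by
  ext k
  simp only [mem_pathSet, Finset.mem_insert]
  constructor
  · rintro ⟨hk, n, hn⟩
    match n, hn with
    | 0, hn => exact Or.inl hn.symm
    | m + 1, hn => exact Or.inr ⟨hk, m, by rwa [Function.iterate_succ_apply] at hn⟩
  · rintro (rfl | ⟨hk, m, hm⟩)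
    · exact ⟨hj, 0, rfl⟩
    · exact ⟨hk, m + 1, by rwa [Function.iterate_succ_apply]⟩

lemma mem_pathSet_self {j : V} (hj : j ≠ T.root) : j ∈ T.pathSet j :=
  T.mem_pathSet.2 ⟨hj, 0, rfl⟩

lemma pathSet_subset_nonroot (j : V) : T.pathSet j ⊆ T.nonroot := fun k hk =>
  T.mem_nonroot.2 (T.mem_pathSet.1 hk).1

lemma mu_pos (k : V) : 0 < T.mu k := by
  refine Finset.prod_pos fun j hj => ?_
  have hjr : j ≠ T.root := (T.mem_pathSet.1 hj).1
  exact div_pos (T.q_pos_down j hjr) (T.q_pos_up j hjr)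

lemma mem_subtree_self (k : V) : k ∈ T.subtree k := T.mem_subtree.2 ⟨0, rfl⟩

lemma subtree_subset_nonroot {k : V} (hk : k ≠ T.root) : T.subtree k ⊆ T.nonroot := by
  intro j hj
  obtain ⟨n, hn⟩ := T.mem_subtree.1 hj
  rw [mem_nonroot]
  rintro rfl
  exact hk ((T.iterate_root n ▸ hn).symm)

/-- telescoping -/
lemma telescope (g : V → ℝ) (hg0 : g T.root = 0) (j : V) :
    g j = ∑ k ∈ T.pathSet j, (g k - g (T.parent k)) := by
  suffices H : ∀ L (j : V), T.layer j = L → g j = ∑ k ∈ T.pathSet j, (g k - g (T.parent k)) from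
    H _ j rfl
  intro L
  induction L using Nat.strong_induction_on with
  | _ L ih =>
    intro j hL
    by_cases hj : j = T.root
    · subst hj; rw [pathSet_root, Finset.sum_empty, hg0]
    · rw [T.pathSet_eq_insert hj, Finset.sum_insert (T.not_mem_pathSet_parent hj)]
      have hlt : T.layer (T.parent j) < L := by
        have := T.layer_parent j hj; omega
      rw [← ih _ hlt _ rfl]
      ring

/-- swap of double sums -/
lemma sum_swap (h : V → V → ℝ) :
    ∑ j ∈ T.nonroot, ∑ k ∈ T.pathSet j, h j k
      = ∑ k ∈ T.nonroot, ∑ j ∈ T.subtree k, h j k := by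
  have hiter : ∀ (n : ℕ) (j k : V), T.parent^[n] j = k → k ≠ T.root → j ≠ T.root := by
    rintro n j k rfl hk rfl; exact hk (T.iterate_root n)
  calc ∑ j ∈ T.nonroot, ∑ k ∈ T.pathSet j, h j k
      = ∑ j ∈ T.nonroot, ∑ k ∈ Finset.univ,
          if k ≠ T.root ∧ (∃ n, T.parent^[n] j = k) then h j k else 0 := by
        refine Finset.sum_congr rfl fun j _ => ?_
        rw [pathSet, Finset.sum_filter]
    _ = ∑ j ∈ Finset.univ, ∑ k ∈ Finset.univ,
          if k ≠ T.root ∧ (∃ n, T.parent^[n] j = k) then h j k else 0 := by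
        refine Finset.sum_subset (Finset.subset_univ _) fun j _ hj => ?_
        rw [mem_nonroot, not_not] at hj
        subst hj
        refine Finset.sum_eq_zero fun k _ => if_neg ?_
        rintro ⟨hk, n, hn⟩
        exact hiter n _ _ hn hk rfl
    _ = ∑ k ∈ Finset.univ, ∑ j ∈ Finset.univ,
          if k ≠ T.root ∧ (∃ n, T.parent^[n] j = k) then h j k else 0 := Finset.sum_comm
    _ = ∑ k ∈ Finset.univ, if k ≠ T.root then
          ∑ j ∈ Finset.univ, (if (∃ n, T.parent^[n] j = k) then h j k else 0) else 0 := by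
        refine Finset.sum_congr rfl fun k _ => ?_
        by_cases hk : k = T.root
        · subst hk
          simp only [ne_eq, not_true_eq_false, false_and, if_false, Finset.sum_const_zero]
        · rw [if_pos hk]
          exact Finset.sum_congr rfl fun j _ => by simp [hk]
    _ = ∑ k ∈ T.nonroot, ∑ j ∈ T.subtree k, h j k := by
        rw [nonroot, Finset.sum_filter]
        refine Finset.sum_congr rfl fun k _ => ?_
        by_cases hk : k = T.root
        · simp [hk]
        · rw [if_pos hk, if_pos hk, subtree, Finset.sum_filter]

noncomputable def Ssum (f : V → ℝ) (k : V) : ℝ := ∑ j ∈ T.subtree k, T.mu j * f j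

lemma opII_eq (f : V → ℝ) (i : V) :
    T.opII f i = (∑ k ∈ T.pathSet i, T.Ssum f k / (T.mu k * T.q k (T.parent k))) / f i := by
  rw [opII]
  congr 1
  exact Finset.sum_congr rfl fun k _ => (one_div_mul_eq_div _ _)

lemma key (hne : T.nonroot.Nonempty) (f g : V → ℝ) (hfpos : ∀ i, i ≠ T.root → 0 < f i)
    (hg0 : g T.root = 0) (hgn : T.norm2 g = 1) :
    1 ≤ T.D g * (T.nonroot.sup' hne fun j => T.opII f j) := by
  classical
  set M := T.nonroot.sup' hne fun j => T.opII f j with hMdef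
  have hSpos : ∀ k ∈ T.nonroot, 0 < T.Ssum f k := by
    intro k hk
    refine Finset.sum_pos (fun j hj => ?_) ⟨k, T.mem_subtree_self k⟩
    have hjr := T.subtree_subset_nonroot (T.mem_nonroot.1 hk) hj
    exact mul_pos (T.mu_pos j) (hfpos j (T.mem_nonroot.1 hjr))
  have hqpos : ∀ k ∈ T.nonroot, 0 < T.mu k * T.q k (T.parent k) := fun k hk =>
    mul_pos (T.mu_pos k) (T.q_pos_up k (T.mem_nonroot.1 hk))
  have hII : ∀ j ∈ T.nonroot,
      ∑ k ∈ T.pathSet j, T.Ssum f k / (T.mu k * T.q k (T.parent k)) = T.opII f j * f j := by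
    intro j hj
    rw [opII_eq, div_mul_cancel₀ _ (hfpos j (T.mem_nonroot.1 hj)).ne']
  have hM : ∀ j ∈ T.nonroot, T.opII f j ≤ M := fun j hj => Finset.le_sup' _ hj
  have step : ∀ j ∈ T.nonroot, g j ^ 2 ≤ (M * f j) *
      ∑ k ∈ T.pathSet j,
        (T.mu k * T.q k (T.parent k) * (g k - g (T.parent k)) ^ 2) / T.Ssum f k := by
    intro j hj
    have hjr := T.mem_nonroot.1 hj
    have hPne : (T.pathSet j).Nonempty := ⟨j, T.mem_pathSet_self hjr⟩
    have hApos : ∀ k ∈ T.pathSet j, 0 < T.Ssum f k / (T.mu k * T.q k (T.parent k)) := fun k hk =>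
      div_pos (hSpos k (T.pathSet_subset_nonroot j hk)) (hqpos k (T.pathSet_subset_nonroot j hk))
    have hsum_a_pos : 0 < ∑ k ∈ T.pathSet j, T.Ssum f k / (T.mu k * T.q k (T.parent k)) :=
      Finset.sum_pos hApos hPne
    have cs := Finset.sq_sum_div_le_sum_sq_div (T.pathSet j)
      (fun k => g k - g (T.parent k)) hApos
    rw [← T.telescope g hg0 j, div_le_iff₀ hsum_a_pos] at cs
    have hterm : ∀ k ∈ T.pathSet j,
        (g k - g (T.parent k)) ^ 2 / (T.Ssum f k / (T.mu k * T.q k (T.parent k)))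
          = (T.mu k * T.q k (T.parent k) * (g k - g (T.parent k)) ^ 2) / T.Ssum f k := by
      intro k hk
      rw [div_div_eq_mul_div]
      congr 1
      ring
    calc g j ^ 2
        ≤ (∑ k ∈ T.pathSet j, (g k - g (T.parent k)) ^ 2 /
            (T.Ssum f k / (T.mu k * T.q k (T.parent k)))) *
          (∑ k ∈ T.pathSet j, T.Ssum f k / (T.mu k * T.q k (T.parent k))) := cs
      _ ≤ (∑ k ∈ T.pathSet j, (g k - g (T.parent k)) ^ 2 /
            (T.Ssum f k / (T.mu k * T.q k (T.parent k)))) * (M * f j) := by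
          refine mul_le_mul_of_nonneg_left ?_
            (Finset.sum_nonneg fun k hk => (div_nonneg (sq_nonneg _) (hApos k hk).le))
          rw [hII j hj]
          exact mul_le_mul_of_nonneg_right (hM j hj) (hfpos j hjr).le
      _ = (M * f j) * ∑ k ∈ T.pathSet j,
            (T.mu k * T.q k (T.parent k) * (g k - g (T.parent k)) ^ 2) / T.Ssum f k := by
          rw [mul_comm]
          congr 1
          exact Finset.sum_congr rfl hterm
  have hmain : (1 : ℝ) ≤ M * T.D g := by
    calc (1 : ℝ) = T.norm2 g := hgn.symm
      _ = ∑ j ∈ T.nonroot, T.mu j * g j ^ 2 := rfl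
      _ ≤ ∑ j ∈ T.nonroot, T.mu j * ((M * f j) *
            ∑ k ∈ T.pathSet j,
              (T.mu k * T.q k (T.parent k) * (g k - g (T.parent k)) ^ 2) / T.Ssum f k) :=
          Finset.sum_le_sum fun j hj =>
            mul_le_mul_of_nonneg_left (step j hj) (T.mu_pos j).le
      _ = M * ∑ j ∈ T.nonroot, ∑ k ∈ T.pathSet j, (T.mu j * f j) *
            ((T.mu k * T.q k (T.parent k) * (g k - g (T.parent k)) ^ 2) / T.Ssum f k) := by
          rw [Finset.mul_sum]
          refine Finset.sum_congr rfl fun j _ => ?_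
          rw [← Finset.mul_sum]
          ring
      _ = M * ∑ k ∈ T.nonroot, ∑ j ∈ T.subtree k, (T.mu j * f j) *
            ((T.mu k * T.q k (T.parent k) * (g k - g (T.parent k)) ^ 2) / T.Ssum f k) := by
          rw [T.sum_swap]
      _ = M * ∑ k ∈ T.nonroot,
            T.mu k * T.q k (T.parent k) * (g k - g (T.parent k)) ^ 2 := by
          congr 1
          refine Finset.sum_congr rfl fun k hk => ?_
          rw [← Finset.sum_mul, show (∑ j ∈ T.subtree k, T.mu j * f j) = T.Ssum f k from rfl,
            mul_comm, div_mul_cancel₀ _ (hSpos k hk).ne']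
      _ = M * T.D g := rfl
  linarith [hmain]

lemma opII_pos (f : V → ℝ) (hfpos : ∀ i, i ≠ T.root → 0 < f i) {j : V} (hj : j ∈ T.nonroot) :
    0 < T.opII f j := by
  have hjr := T.mem_nonroot.1 hj
  rw [opII_eq]
  refine div_pos (Finset.sum_pos (fun k hk => ?_) ⟨j, T.mem_pathSet_self hjr⟩) (hfpos j hjr)
  have hk' := T.pathSet_subset_nonroot j hk
  have hkr := T.mem_nonroot.1 hk'
  refine div_pos ?_ (mul_pos (T.mu_pos k) (T.q_pos_up k hkr))
  refine Finset.sum_pos (fun i hi => ?_) ⟨k, T.mem_subtree_self k⟩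
  have hir := T.mem_nonroot.1 (T.subtree_subset_nonroot hkr hi)
  exact mul_pos (T.mu_pos i) (hfpos i hir)

lemma lam0_set_nonempty (hne : T.nonroot.Nonempty) :
    {r | ∃ f : V → ℝ, f T.root = 0 ∧ T.norm2 f = 1 ∧ r = T.D f}.Nonempty := by
  classical
  obtain ⟨i0, hi0⟩ := hne
  have hi0r := T.mem_nonroot.1 hi0
  set g0 : V → ℝ := fun v => if v = i0 then (Real.sqrt (T.mu i0))⁻¹ else 0 with hg0def
  have hroot : g0 T.root = 0 := by simp [hg0def, Ne.symm hi0r]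
  have hnorm : T.norm2 g0 = 1 := by
    rw [norm2, Finset.sum_eq_single_of_mem i0 hi0 (fun j hj hji => by simp [hg0def, hji])]
    have hmu := T.mu_pos i0
    simp only [hg0def, if_pos rfl]
    rw [inv_pow, Real.sq_sqrt hmu.le, mul_inv_cancel₀ hmu.ne']
  exact ⟨T.D g0, g0, hroot, hnorm, rfl⟩

end BDTree
/-- lower bound via the double summation form. -/
theorem stmt4 {V : Type*} [Fintype V] (T : BDTree V) (hne : T.nonroot.Nonempty)
    (f g : V → ℝ) (hf0 : f T.root = 0) (hfpos : ∀ i, i ≠ T.root → 0 < f i)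
    (hg0 : g T.root = 0) (hgn : T.norm2 g = 1) :
    1 ≤ T.D g * (T.nonroot.sup' hne fun j => T.opII f j) ∧
      T.nonroot.inf' hne (fun i => (T.opII f i)⁻¹) ≤ T.lam0 := by
  classical
  refine ⟨T.key hne f g hfpos hg0 hgn, ?_⟩
  obtain ⟨j0, hj0, hj0eq⟩ := Finset.exists_mem_eq_sup' hne (fun j => T.opII f j)
  have hpos : 0 < T.opII f j0 := T.opII_pos f hfpos hj0
  calc T.nonroot.inf' hne (fun i => (T.opII f i)⁻¹) ≤ (T.opII f j0)⁻¹ := Finset.inf'_le _ hj0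
    _ ≤ T.lam0 := by
        refine le_csInf (T.lam0_set_nonempty hne) ?_
        rintro r ⟨g', hg'0, hg'n, rfl⟩
        have h1 := T.key hne f g' hfpos hg'0 hg'n
        rw [hj0eq] at h1
        rw [inv_eq_one_div, div_le_iff₀ hpos]
        linarith
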